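/- Let V be a finite type with Fintype.card V = n and E : V → V → Prop a relation with no directed cycles (¬ Relation.TransGen E v v for every v). Suppose the longest directed path in (V,E) has length ℓ with ℓ ≥ 1 (there exists a directed path of length ℓ and no directed path of length ℓ+1). If E is extremely reduced, then the number of edges of (V,E) is at most t(n−ℓ+1, 2) + T(n, ℓ, 1), where t(m, 2) is the number of edges of SimpleGraph.turanGraph m 2 and T(n, ℓ, 1) := C(n, 2) − C(n−ℓ+1, 2). -/

import Mathlib

/-- A directed path of length `k` in `(V, E)`: a map `p : Fin (k+1) → V` with
`E (p i) (p (i+1))` for all `i < k`. -/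
def IsDirPath {V : Type*} (E : V → V → Prop) (k : ℕ) (p : Fin (k + 1) → V) : Prop :=
  ∀ i : Fin k, E (p i.castSucc) (p i.succ)

/-- A directed path of length `k` from `v` to `w`. -/
def IsDirPathFromTo {V : Type*} (E : V → V → Prop) (k : ℕ) (p : Fin (k + 1) → V)
    (v w : V) : Prop :=
  p 0 = v ∧ p (Fin.last k) = w ∧ IsDirPath E k p

/-- `E` is extremely reduced: any two non-adjacent vertices with a common ancestor have no
common descendant. -/
def ExtremelyReduced {V : Type*} (E : V → V → Prop) : Prop :=
  ∀ x y : V, ¬E x y → ¬E y x →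
    (∃ a : V, Relation.TransGen E a x ∧ Relation.TransGen E a y) →
      ¬∃ b : V, Relation.TransGen E x b ∧ Relation.TransGen E y b

/-- The number of edges of `(V, E)`: the cardinality of the finset of pairs `(u, v)`
with `E u v`. -/
noncomputable def edgeCount {V : Type*} [Fintype V] (E : V → V → Prop) : ℕ :=
  letI := Classical.decPred fun p : V × V => E p.1 p.2
  (Finset.univ.filter fun p : V × V => E p.1 p.2).card

/-- `t(n, r)`: the number of edges of the Turán graph `SimpleGraph.turanGraph n r`. -/
def turanEdges (n r : ℕ) : ℕ :=
  (SimpleGraph.turanGraph n r).edgeFinset.card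

/-- `T(n, ℓ, 1) = C(n, 2) - C(n - ℓ + 1, 2)` (truncated subtraction in `ℕ`). -/
def intervalTuran (n ℓ : ℕ) : ℕ := Nat.choose n 2 - Nat.choose (n - ℓ + 1) 2



open Finset
open scoped Classical

universe u

private def gg (m : ℕ) : ℕ := Nat.choose (m/2) 2 + Nat.choose ((m+1)/2) 2

private lemma choose_two_succ (a : ℕ) : (a+1).choose 2 = a.choose 2 + a := by
  have : (a+1).choose 2 = a.choose 1 + a.choose 2 := rfl
  rw [this, Nat.choose_one_right]; omega

private lemma two_mul_choose_two (a : ℕ) : 2 * a.choose 2 + a = a * a := by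
  induction a with
  | zero => rfl
  | succ a ih =>
    rw [choose_two_succ]
    have h : (a+1) * (a+1) = a*a + 2*a + 1 := by ring
    omega

private lemma gg_succ (k : ℕ) : gg (k+1) = gg k + k/2 := by
  obtain ⟨t, rfl | rfl⟩ := Nat.even_or_odd' k
  · unfold gg
    have h1 : (2*t)/2 = t := by omega
    have h2 : (2*t+1)/2 = t := by omega
    have h3 : (2*t+1+1)/2 = t+1 := by omega
    rw [h1, h2, h3, choose_two_succ]
    omega
  · unfold gg
    have h1 : (2*t+1)/2 = t := by omega
    have h2 : (2*t+1+1)/2 = t+1 := by omega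
    have h3 : (2*t+1+1+1)/2 = t+1 := by omega
    rw [h1, h2, h3, choose_two_succ]
    omega

private lemma gg_two : gg 2 = 0 := by decide

private lemma gg_le_choose (k : ℕ) : gg (k+1) ≤ k.choose 2 := by
  induction k with
  | zero => decide
  | succ k ih =>
    rw [gg_succ, choose_two_succ]
    omega

private lemma gg_add_quarter (m : ℕ) : gg m + (m/2) * ((m+1)/2) = m.choose 2 := by
  obtain ⟨t, rfl | rfl⟩ := Nat.even_or_odd' m
  · unfold gg
    have h1 : (2*t)/2 = t := by omega
    have h2 : (2*t+1)/2 = t := by omega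
    rw [h1, h2]
    have e1 := two_mul_choose_two t
    have e2 := two_mul_choose_two (2*t)
    nlinarith [e1, e2]
  · unfold gg
    have h1 : (2*t+1)/2 = t := by omega
    have h2 : (2*t+1+1)/2 = t+1 := by omega
    rw [h1, h2]
    have e1 := two_mul_choose_two t
    have e15 := two_mul_choose_two (t+1)
    have e2 := two_mul_choose_two (2*t+1)
    nlinarith [e1, e15, e2]

private noncomputable def incCount (V : Type u) [Fintype V] (lt : V → V → Prop) : ℕ :=
  (Finset.univ.filter fun p : V × V => p.1 ≠ p.2 ∧ ¬lt p.1 p.2 ∧ ¬lt p.2 p.1).card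

private noncomputable def incdeg {V : Type u} [Fintype V] (lt : V → V → Prop) (y : V) : ℕ :=
  (Finset.univ.filter fun v : V => v ≠ y ∧ ¬lt v y ∧ ¬lt y v).card

private lemma chain_lt {V : Type u} {lt : V → V → Prop} (htr : Transitive lt) {ℓ : ℕ}
    {c : Fin (ℓ+1) → V} (hc : ∀ i : Fin ℓ, lt (c i.castSucc) (c i.succ)) :
    ∀ j i : Fin (ℓ+1), i < j → lt (c i) (c j) := by
  intro j
  induction j using Fin.induction with
  | zero => intro i hi; exact absurd hi (Fin.not_lt_zero i)
  | succ j ihj =>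
    intro i hi
    have hiv : (i : ℕ) < (j : ℕ) + 1 := by
      have := hi
      rw [Fin.lt_def] at this
      simpa [Fin.val_succ] using this
    rcases Nat.lt_or_ge (i : ℕ) (j : ℕ) with hlt | hge
    · have h1 : i < j.castSucc := by rw [Fin.lt_def]; simpa using hlt
      exact htr (ihj i h1) (hc j)
    · have : (i : ℕ) = (j : ℕ) := by omega
      have : i = j.castSucc := by
        apply Fin.ext; simpa using this
      rw [this]
      exact hc j

private lemma comparable_card {V : Type u} [Fintype V] {lt : V → V → Prop} {ℓ : ℕ} (h : V → ℕ)
    (hub : ∀ v, h v ≤ ℓ) (hmono : ∀ u v, lt u v → h u < h v)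
    (S : Finset V) (hS : ∀ u ∈ S, ∀ v ∈ S, u ≠ v → lt u v ∨ lt v u) :
    S.card ≤ ℓ + 1 := by
  have hle := Finset.card_le_card_of_injOn (t := Finset.range (ℓ+1)) h
    (fun a _ => Finset.mem_range.mpr (by have := hub a; omega))
    (by
      intro a ha b hb hab
      by_contra hne
      rcases hS a ha b hb hne with hl | hl
      · have := hmono _ _ hl; omega
      · have := hmono _ _ hl; omega)
  simpa using hle

private lemma card_partition {V : Type u} [Fintype V] (lt : V → V → Prop)
    (hasym : ∀ u v, lt u v → ¬ lt v u) (hirr : Irreflexive lt) (y : V) :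
    Fintype.card V = 1 + (Finset.univ.filter fun v => lt y v).card
      + (Finset.univ.filter fun v => lt v y).card + incdeg lt y := by
  conv_lhs => rw [← Finset.card_univ]
  have hu : (Finset.univ : Finset V) =
      insert y (((Finset.univ.filter fun v => lt y v) ∪ (Finset.univ.filter fun v => lt v y))
        ∪ (Finset.univ.filter fun v : V => v ≠ y ∧ ¬lt v y ∧ ¬lt y v)) := by
    ext v
    simp only [Finset.mem_univ, Finset.mem_insert, Finset.mem_union, Finset.mem_filter, true_and,
      true_iff]
    by_cases h1 : v = y
    · exact Or.inl h1
    · by_cases h2 : lt y v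
      · exact Or.inr (Or.inl (Or.inl h2))
      · by_cases h3 : lt v y
        · exact Or.inr (Or.inl (Or.inr h3))
        · exact Or.inr (Or.inr ⟨h1, h3, h2⟩)
  conv_lhs => rw [hu]
  rw [Finset.card_insert_of_notMem (by
    simp only [Finset.mem_union, Finset.mem_filter, Finset.mem_univ, true_and]
    rintro ((h | h) | ⟨h, -⟩)
    · exact hirr y h
    · exact hirr y h
    · exact h rfl)]
  rw [Finset.card_union_of_disjoint (by
    rw [Finset.disjoint_left]
    rintro a (ha : a ∈ _ ∪ _) hb
    simp only [Finset.mem_union, Finset.mem_filter, Finset.mem_univ, true_and] at ha hb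
    rcases ha with h | h
    · exact hb.2.2 h
    · exact hb.2.1 h)]
  rw [Finset.card_union_of_disjoint (by
    rw [Finset.disjoint_left]
    intro a ha hb
    simp only [Finset.mem_filter, Finset.mem_univ, true_and] at ha hb
    exact hasym _ _ ha hb)]
  rw [incdeg]
  omega

private lemma incCount_sub {V : Type u} [Fintype V] (lt : V → V → Prop) (y : V) :
    incCount {v : V // v ≠ y} (fun a b => lt a.1 b.1) + 2 * incdeg lt y ≤ incCount V lt := by
  set q : V × V → Prop := fun p => p.1 ≠ p.2 ∧ ¬lt p.1 p.2 ∧ ¬lt p.2 p.1 with hq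
  set A := Finset.univ.filter (fun p : V × V => q p ∧ p.1 ≠ y ∧ p.2 ≠ y) with hA
  set B := Finset.univ.filter (fun p : V × V => q p ∧ p.1 = y) with hB
  set C := Finset.univ.filter (fun p : V × V => q p ∧ p.2 = y) with hC
  have hBcard : B.card = incdeg lt y := by
    apply Finset.card_nbij (fun p => p.2)
    · intro p hp
      simp only [hB, hq, Finset.mem_coe, Finset.mem_filter, Finset.mem_univ, true_and] at hp
      obtain ⟨⟨hne, h1, h2⟩, hp1⟩ := hp
      simp only [Finset.mem_coe, Finset.mem_filter, Finset.mem_univ, true_and]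
      refine ⟨by rw [← hp1]; exact fun e => hne e.symm, ?_, ?_⟩
      · rw [← hp1]; exact h2
      · rw [← hp1]; exact h1
    · intro p hp p' hp' hpp
      simp only [hB, Finset.mem_coe, Finset.mem_filter] at hp hp'
      have : p.1 = p'.1 := by rw [hp.2.2, hp'.2.2]
      exact Prod.ext this hpp
    · intro v hv
      simp only [Finset.coe_filter, Finset.mem_univ, true_and, Set.mem_setOf_eq] at hv
      simp only [Set.mem_image, Finset.mem_coe]
      refine ⟨(y, v), ?_, rfl⟩
      simp only [hB, hq, Finset.mem_filter, Finset.mem_univ, true_and]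
      exact ⟨⟨fun e => hv.1 e.symm, hv.2.2, hv.2.1⟩, trivial⟩
  have hCcard : C.card = incdeg lt y := by
    apply Finset.card_nbij (fun p => p.1)
    · intro p hp
      simp only [hC, hq, Finset.mem_coe, Finset.mem_filter, Finset.mem_univ, true_and] at hp
      obtain ⟨⟨hne, h1, h2⟩, hp2⟩ := hp
      simp only [Finset.mem_coe, Finset.mem_filter, Finset.mem_univ, true_and]
      refine ⟨by rw [← hp2]; exact hne, ?_, ?_⟩
      · rw [← hp2]; exact h1
      · rw [← hp2]; exact h2
    · intro p hp p' hp' hpp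
      simp only [hC, Finset.mem_coe, Finset.mem_filter] at hp hp'
      have : p.2 = p'.2 := by rw [hp.2.2, hp'.2.2]
      exact Prod.ext hpp this
    · intro v hv
      simp only [Finset.coe_filter, Finset.mem_univ, true_and, Set.mem_setOf_eq] at hv
      simp only [Set.mem_image, Finset.mem_coe]
      refine ⟨(v, y), ?_, rfl⟩
      simp only [hC, hq, Finset.mem_filter, Finset.mem_univ, true_and]
      exact ⟨⟨hv.1, hv.2.1, hv.2.2⟩, trivial⟩
  have hAcard : incCount {v : V // v ≠ y} (fun a b => lt a.1 b.1) ≤ A.card := by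
    rw [incCount]
    apply Finset.card_le_card_of_injOn (fun p => (p.1.1, p.2.1))
    · intro p hp
      simp only [Finset.mem_coe, Finset.mem_filter, Finset.mem_univ, true_and] at hp
      simp only [hA, hq, Finset.mem_coe, Finset.mem_filter, Finset.mem_univ, true_and]
      exact ⟨⟨fun e => hp.1 (Subtype.ext e), hp.2.1, hp.2.2⟩, p.1.2, p.2.2⟩
    · intro p _ p' _ hpp
      have h1 : p.1.1 = p'.1.1 := congrArg Prod.fst hpp
      have h2 : p.2.1 = p'.2.1 := congrArg Prod.snd hpp
      exact Prod.ext (Subtype.ext h1) (Subtype.ext h2)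
  have hdisjBC : Disjoint B C := by
    rw [Finset.disjoint_left]
    intro p hp hp'
    simp only [hB, hC, hq, Finset.mem_filter] at hp hp'
    exact hp.2.1.1 (hp.2.2.trans hp'.2.2.symm)
  have hdisjABC : Disjoint A (B ∪ C) := by
    rw [Finset.disjoint_left]
    intro p hp hp'
    simp only [hA, hB, hC, Finset.mem_union, Finset.mem_filter] at hp hp'
    rcases hp' with h | h
    · exact hp.2.2.1 h.2.2
    · exact hp.2.2.2 h.2.2
  have hsub : A ∪ (B ∪ C) ⊆ Finset.univ.filter q := by
    intro p hp
    simp only [hA, hB, hC, Finset.mem_union, Finset.mem_filter] at hp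
    rcases hp with h | h | h
    · exact Finset.mem_filter.mpr ⟨Finset.mem_univ _, h.2.1⟩
    · exact Finset.mem_filter.mpr ⟨Finset.mem_univ _, h.2.1⟩
    · exact Finset.mem_filter.mpr ⟨Finset.mem_univ _, h.2.1⟩
  have := Finset.card_le_card hsub
  rw [Finset.card_union_of_disjoint hdisjABC, Finset.card_union_of_disjoint hdisjBC] at this
  have hfin : (Finset.univ.filter q).card = incCount V lt := rfl
  omega

private lemma card_ge_of_offchain {V : Type u} [Fintype V] {ℓ : ℕ} {c : Fin (ℓ+1) → V}
    (hcinj : Function.Injective c) {y : V} (hy : y ∉ Set.range c) :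
    ℓ + 2 ≤ Fintype.card V := by
  have h1 : (insert y (Finset.univ.image c)).card = ℓ + 2 := by
    rw [Finset.card_insert_of_notMem (by
      simp only [Finset.mem_image]
      rintro ⟨i, -, hi⟩
      exact hy ⟨i, hi⟩)]
    rw [Finset.card_image_of_injective _ hcinj, Finset.card_univ, Fintype.card_fin]
  calc ℓ + 2 = (insert y (Finset.univ.image c)).card := h1.symm
    _ ≤ (Finset.univ : Finset V).card := Finset.card_le_univ _
    _ = Fintype.card V := Finset.card_univ

private def Stmt (n : ℕ) : Prop :=
  ∀ (V : Type u) [Fintype V] (lt : V → V → Prop), Fintype.card V = n →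
    Transitive lt → Irreflexive lt →
    ∀ ℓ : ℕ, 1 ≤ ℓ →
    ∀ h : V → ℕ, (∀ v, h v ≤ ℓ) → (∀ u v, lt u v → h u < h v) →
    ∀ c : Fin (ℓ+1) → V, (∀ i : Fin ℓ, lt (c i.castSucc) (c i.succ)) →
    (∀ x y : V, ¬lt x y → ¬lt y x → (∃ a, lt a x ∧ lt a y) → ¬∃ b, lt x b ∧ lt y b) →
    2 * gg (n - ℓ + 1) ≤ incCount V lt

private lemma lemA (n : ℕ) (IH : ∀ n' : ℕ, n' < n → Stmt.{u} n')
    (V : Type u) [Fintype V] (lt : V → V → Prop) (hcard : Fintype.card V = n)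
    (htr : Transitive lt) (hirr : Irreflexive lt)
    (ℓ : ℕ) (hl : 1 ≤ ℓ)
    (h : V → ℕ) (hub : ∀ v, h v ≤ ℓ) (hmono : ∀ u v, lt u v → h u < h v)
    (c : Fin (ℓ+1) → V) (hc : ∀ i : Fin ℓ, lt (c i.castSucc) (c i.succ))
    (hIC : ∀ x y : V, ¬lt x y → ¬lt y x → (∃ a, lt a x ∧ lt a y) → ¬∃ b, lt x b ∧ lt y b)
    (hminC : ∀ v, (∀ u, ¬ lt u v) → v = c 0) :
    2 * gg (n - ℓ + 1) ≤ incCount V lt := by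
  have hclt := chain_lt htr hc
  have hcinj : Function.Injective c := by
    intro i j hij
    by_contra hne
    rcases lt_or_gt_of_ne hne with hlt | hlt
    · exact hirr _ (hij ▸ hclt j i hlt)
    · exact hirr _ (hij ▸ hclt i j hlt)
  have hn1 : ℓ + 1 ≤ n := by
    have := Fintype.card_le_of_injective c hcinj
    rwa [Fintype.card_fin, hcard] at this
  -- everything not equal to c 0 is above c 0
  have hbelow : ∀ v, v ≠ c 0 → lt (c 0) v := by
    have key : ∀ k, ∀ v, h v ≤ k → v ≠ c 0 → lt (c 0) v := by
      intro k
      induction k with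
      | zero =>
        intro v hv hne
        have hnm : ¬ (∀ u, ¬ lt u v) := fun hm => hne (hminC v hm)
        push_neg at hnm
        obtain ⟨u, hu⟩ := hnm
        have := hmono u v hu
        omega
      | succ k ihk =>
        intro v hv hne
        have hnm : ¬ (∀ u, ¬ lt u v) := fun hm => hne (hminC v hm)
        push_neg at hnm
        obtain ⟨u, hu⟩ := hnm
        by_cases hu0 : u = c 0
        · rw [← hu0]; exact hu
        · exact htr (ihk u (by have := hmono u v hu; omega) hu0) hu
    exact fun v hv => key (h v) v le_rfl hv
  rcases Nat.lt_or_ge ℓ 2 with hl2 | hl2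
  · -- ℓ = 1 : everything off c 0 is pairwise incomparable
    have hℓ1 : ℓ = 1 := by omega
    subst hℓ1
    have hpair : ∀ v w : V, v ≠ c 0 → w ≠ c 0 → ¬ lt v w := by
      intro v w hv hw hvw
      have h1 := hmono _ _ (hbelow v hv)
      have h2 := hmono _ _ hvw
      have := hub w
      omega
    obtain ⟨k, hk⟩ : ∃ k, n = k + 1 := ⟨n - 1, by omega⟩
    have hD : ((Finset.univ.erase (c 0)).offDiag).card = k * k - k := by
      rw [Finset.offDiag_card, Finset.card_erase_of_mem (Finset.mem_univ _),
        Finset.card_univ, hcard, hk, Nat.add_sub_cancel]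
    have hsub : (Finset.univ.erase (c 0)).offDiag ⊆
        (Finset.univ.filter fun p : V × V => p.1 ≠ p.2 ∧ ¬lt p.1 p.2 ∧ ¬lt p.2 p.1) := by
      intro p hp
      rw [Finset.mem_offDiag] at hp
      obtain ⟨hp1, hp2, hp3⟩ := hp
      rw [Finset.mem_erase] at hp1 hp2
      exact Finset.mem_filter.mpr ⟨Finset.mem_univ _,
        hp3, hpair _ _ hp1.1 hp2.1, hpair _ _ hp2.1 hp1.1⟩
    have hineq := Finset.card_le_card hsub
    have h2 := two_mul_choose_two k
    have h3 := gg_le_choose k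
    have hrw : n - 1 + 1 = k + 1 := by omega
    rw [hrw]
    have hfin : (Finset.univ.filter fun p : V × V =>
        p.1 ≠ p.2 ∧ ¬lt p.1 p.2 ∧ ¬lt p.2 p.1).card = incCount V lt := rfl
    omega
  · -- ℓ ≥ 2 : remove c 0 and recurse
    obtain ⟨ℓ', hℓ'⟩ : ∃ l', ℓ = l' + 1 := ⟨ℓ - 1, by omega⟩
    subst hℓ'
    have hl' : 1 ≤ ℓ' := by omega
    set x0 := c 0 with hx0
    have hVcard : Fintype.card {v : V // v ≠ x0} = n - 1 := by
      rw [Fintype.card_subtype_compl, Fintype.card_subtype_eq, hcard]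
    have hch : ∀ i : Fin (ℓ'+1+1), (0 : Fin (ℓ'+1+1)) < i → c i ≠ x0 := by
      intro i hi he
      exact hirr _ (he ▸ hclt i 0 hi)
    have hmono1 : ∀ v : V, v ≠ x0 → 1 ≤ h v := by
      intro v hv
      have := hmono _ _ (hbelow v hv)
      omega
    have hres := IH (n-1) (by omega) {v : V // v ≠ x0} (fun a b => lt a.1 b.1) hVcard
      (fun a b c hab hbc => htr hab hbc) (fun a ha => hirr a.1 ha)
      ℓ' hl'
      (fun v => h v.1 - 1) (fun v => by have := hub v.1; show h v.1 - 1 ≤ ℓ'; omega)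
      (fun u v huv => by
        show h u.1 - 1 < h v.1 - 1
        have h1 := hmono1 u.1 u.2
        have h2 := hmono _ _ huv
        omega)
      (fun i => ⟨c i.succ, hch i.succ (Fin.succ_pos i)⟩)
      (fun i => by
        show lt (c (i.castSucc).succ) (c i.succ.succ)
        have : (i.castSucc).succ = (i.succ).castSucc := by
          apply Fin.ext
          simp
        rw [this]
        exact hc i.succ)
      (fun x y hxy hyx hex => by
        obtain ⟨a, ha1, ha2⟩ := hex
        have := hIC x.1 y.1 hxy hyx ⟨a.1, ha1, ha2⟩
        intro ⟨b, hb1, hb2⟩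
        exact this ⟨b.1, hb1, hb2⟩)
    have hsub := incCount_sub lt x0
    have hrw : (n-1) - ℓ' + 1 = n - (ℓ' + 1) + 1 := by omega
    rw [hrw] at hres
    omega

private lemma main_stmt : ∀ n : ℕ, Stmt.{u} n := by
  intro n
  induction n using Nat.strong_induction_on with
  | _ n IH =>
  intro V _ lt hcard htr hirr ℓ hl h hub hmono c hc hIC
  have hclt := chain_lt htr hc
  have hcinj : Function.Injective c := by
    intro i j hij
    by_contra hne
    rcases lt_or_gt_of_ne hne with hlt | hlt
    · exact hirr _ (hij ▸ hclt j i hlt)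
    · exact hirr _ (hij ▸ hclt i j hlt)
  have hn1 : ℓ + 1 ≤ n := by
    have := Fintype.card_le_of_injective c hcinj
    rwa [Fintype.card_fin, hcard] at this
  by_cases hminE : ∃ v, (∀ u, ¬ lt u v) ∧ v ∉ Set.range c
  · by_cases hmaxE : ∃ v, (∀ u, ¬ lt v u) ∧ v ∉ Set.range c
    · -- both a minimal and a maximal vertex off the chain
      obtain ⟨y0, hy0min, hy0R⟩ := hminE
      obtain ⟨w0, hw0max, hw0R⟩ := hmaxE
      have hn2 : ℓ + 2 ≤ n := by
        have := card_ge_of_offchain hcinj hy0R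
        omega
      by_cases hbig : ∃ y, y ∉ Set.range c ∧ (n - ℓ + 1 - 1)/2 ≤ incdeg lt y
      · -- remove a vertex of large incomparability degree
        obtain ⟨y, hyR, hyd⟩ := hbig
        have hVcard : Fintype.card {v : V // v ≠ y} = n - 1 := by
          rw [Fintype.card_subtype_compl, Fintype.card_subtype_eq, hcard]
        have hres := IH (n-1) (by omega) {v : V // v ≠ y} (fun a b => lt a.1 b.1) hVcard
          (fun a b c hab hbc => htr hab hbc) (fun a ha => hirr a.1 ha)
          ℓ hl
          (fun v => h v.1) (fun v => hub v.1) (fun u v huv => hmono _ _ huv)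
          (fun i => ⟨c i, fun he => hyR ⟨i, he⟩⟩)
          (fun i => hc i)
          (fun x y' hxy hyx hex => by
            obtain ⟨a, ha1, ha2⟩ := hex
            have := hIC x.1 y'.1 hxy hyx ⟨a.1, ha1, ha2⟩
            intro ⟨b, hb1, hb2⟩
            exact this ⟨b.1, hb1, hb2⟩)
        have hsub := incCount_sub lt y
        have hrw : (n-1) - ℓ + 1 = (n - ℓ + 1) - 1 := by omega
        rw [hrw] at hres
        have hgs : gg ((n - ℓ + 1) - 1 + 1) = gg ((n - ℓ + 1) - 1) + ((n - ℓ + 1) - 1)/2 :=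
          gg_succ _
        have hrw2 : (n - ℓ + 1) - 1 + 1 = n - ℓ + 1 := by omega
        rw [hrw2] at hgs
        omega
      · -- contradiction: small degrees are impossible
        exfalso
        push_neg at hbig
        have hy0d := hbig y0 hy0R
        have hw0d := hbig w0 hw0R
        have hUcard : n = 1 + (Finset.univ.filter fun v => lt y0 v).card + incdeg lt y0 := by
          have hp := card_partition lt (fun u v huv hvu => hirr u (htr huv hvu)) hirr y0
          have hzero : (Finset.univ.filter fun v => lt v y0).card = 0 := by
            rw [Finset.card_eq_zero, Finset.filter_eq_empty_iff]
            intro v _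
            exact hy0min v
          rw [hzero, hcard] at hp
          omega
        have hWcard : n = 1 + (Finset.univ.filter fun v => lt v w0).card + incdeg lt w0 := by
          have hp := card_partition lt (fun u v huv hvu => hirr u (htr huv hvu)) hirr w0
          have hzero : (Finset.univ.filter fun v => lt w0 v).card = 0 := by
            rw [Finset.card_eq_zero, Finset.filter_eq_empty_iff]
            intro v _
            exact hw0max v
          rw [hzero, hcard] at hp
          omega
        have hySet : ∀ v ∈ (Finset.univ.filter fun v => lt y0 v) ∩
            (Finset.univ.filter fun v => lt v w0), lt y0 v ∧ lt v w0 := by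
          intro v hv
          have hv' := Finset.mem_inter.mp hv
          exact ⟨(Finset.mem_filter.mp hv'.1).2, (Finset.mem_filter.mp hv'.2).2⟩
        have hIcap : ((Finset.univ.filter fun v => lt y0 v) ∩
            (Finset.univ.filter fun v => lt v w0)).card + 2 ≤ ℓ + 1 := by
          rcases Finset.eq_empty_or_nonempty ((Finset.univ.filter fun v => lt y0 v) ∩
            (Finset.univ.filter fun v => lt v w0)) with hemp | ⟨v0, hv0⟩
          · rw [hemp]
            simpa using hl
          · have hv0' := hySet v0 hv0
            have hyw : lt y0 w0 := htr hv0'.1 hv0'.2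
            have hScomp : ∀ u ∈ insert y0 (insert w0 ((Finset.univ.filter fun v => lt y0 v) ∩
                (Finset.univ.filter fun v => lt v w0))),
                ∀ v ∈ insert y0 (insert w0 ((Finset.univ.filter fun v => lt y0 v) ∩
                (Finset.univ.filter fun v => lt v w0))), u ≠ v → lt u v ∨ lt v u := by
              intro u hu v hv hne
              rw [Finset.mem_insert, Finset.mem_insert] at hu hv
              rcases hu with rfl | rfl | hu
              · rcases hv with rfl | rfl | hv
                · exact absurd rfl hne
                · exact Or.inl hyw
                · exact Or.inl (hySet v hv).1
              · rcases hv with rfl | rfl | hv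
                · exact Or.inr hyw
                · exact absurd rfl hne
                · exact Or.inr (hySet v hv).2
              · rcases hv with rfl | rfl | hv
                · exact Or.inr (hySet u hu).1
                · exact Or.inl (hySet u hu).2
                · by_contra hcon
                  push_neg at hcon
                  exact hIC u v hcon.1 hcon.2 ⟨y0, (hySet u hu).1, (hySet v hv).1⟩
                    ⟨w0, (hySet u hu).2, (hySet v hv).2⟩
            have hSbound := comparable_card h hub hmono _ hScomp
            have hyne : y0 ≠ w0 := fun he => hirr y0 (he ▸ hyw)
            have hwnotin : w0 ∉ (Finset.univ.filter fun v => lt y0 v) ∩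
                (Finset.univ.filter fun v => lt v w0) := by
              intro hmem
              exact hirr w0 (hySet w0 hmem).2
            have hynotin : y0 ∉ insert w0 ((Finset.univ.filter fun v => lt y0 v) ∩
                (Finset.univ.filter fun v => lt v w0)) := by
              rw [Finset.mem_insert]
              rintro (he | hmem)
              · exact hyne he
              · exact hirr y0 (hySet y0 hmem).1
            rw [Finset.card_insert_of_notMem hynotin,
              Finset.card_insert_of_notMem hwnotin] at hSbound
            omega
        have hcup := Finset.card_le_univ ((Finset.univ.filter fun v => lt y0 v) ∪
            (Finset.univ.filter fun v => lt v w0))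
        rw [hcard] at hcup
        have hsum := Finset.card_union_add_card_inter
          (Finset.univ.filter fun v => lt y0 v) (Finset.univ.filter fun v => lt v w0)
        omega
    · -- no maximal vertex off the chain : flip and use lemA
      push_neg at hmaxE
      have hmaxC : ∀ v, (∀ u, ¬ lt v u) → v = c (Fin.last ℓ) := by
        intro v hv
        obtain ⟨i, rfl⟩ := hmaxE v hv
        by_cases hi : i = Fin.last ℓ
        · rw [hi]
        · exfalso
          have hilt : i < Fin.last ℓ := lt_of_le_of_ne (Fin.le_last i) hi
          exact hv _ (hclt (Fin.last ℓ) i hilt)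
      have hres := lemA n IH V (fun a b => lt b a) hcard
        (fun a b c hab hbc => htr hbc hab) hirr
        ℓ hl
        (fun v => ℓ - h v) (fun v => by show ℓ - h v ≤ ℓ; omega)
        (fun u v huv => by
          show ℓ - h u < ℓ - h v
          have h1 := hmono _ _ huv
          have h2 := hub u
          omega)
        (fun i => c i.rev)
        (fun i => by
          show lt (c (i.succ).rev) (c (i.castSucc).rev)
          have e1 : (i.succ).rev = (i.rev).castSucc := by
            apply Fin.ext
            simp only [Fin.val_rev, Fin.val_succ, Fin.coe_castSucc]
            omega
          have e2 : (i.castSucc).rev = (i.rev).succ := by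
            apply Fin.ext
            simp only [Fin.val_rev, Fin.val_succ, Fin.coe_castSucc]
            omega
          rw [e1, e2]
          exact hc i.rev)
        (fun x y hxy hyx hex => by
          obtain ⟨a, ha1, ha2⟩ := hex
          intro ⟨b, hb1, hb2⟩
          exact hIC x y hyx hxy ⟨b, hb1, hb2⟩ ⟨a, ha1, ha2⟩)
        (by
          intro v hv
          have hrev : ((0 : Fin (ℓ+1))).rev = Fin.last ℓ := by
            apply Fin.ext
            simp [Fin.val_rev]
          show v = c (0 : Fin (ℓ+1)).rev
          rw [hrev]
          exact hmaxC v hv)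
      have heq : incCount V (fun a b => lt b a) = incCount V lt := by
        unfold incCount
        congr 1
        apply Finset.filter_congr
        intro p _
        constructor
        · rintro ⟨h1, h2, h3⟩; exact ⟨h1, h3, h2⟩
        · rintro ⟨h1, h2, h3⟩; exact ⟨h1, h3, h2⟩
      rw [heq] at hres
      exact hres
  · -- no minimal vertex off the chain : use lemA directly
    push_neg at hminE
    have hminC : ∀ v, (∀ u, ¬ lt u v) → v = c 0 := by
      intro v hv
      obtain ⟨i, rfl⟩ := hminE v hv
      by_cases hi : i = 0
      · rw [hi]
      · exfalso
        exact hv _ (hclt i 0 (Fin.pos_of_ne_zero hi))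
    exact lemA n IH V lt hcard htr hirr ℓ hl h hub hmono c hc hIC hminC

private lemma count_mod_range (m : ℕ) :
    ((Finset.range m).filter (fun x => x % 2 = 0)).card = (m+1)/2 ∧
    ((Finset.range m).filter (fun x => x % 2 = 1)).card = m/2 := by
  induction m with
  | zero => simp
  | succ m ih =>
    rw [Finset.range_add_one, Finset.filter_insert, Finset.filter_insert]
    rcases Nat.even_or_odd m with he | ho
    · have h0 : m % 2 = 0 := Nat.even_iff.mp he
      rw [if_pos h0, if_neg (by omega)]
      rw [Finset.card_insert_of_notMem (by simp)]
      omega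
    · have h1 : m % 2 = 1 := Nat.odd_iff.mp ho
      rw [if_neg (by omega), if_pos h1]
      rw [Finset.card_insert_of_notMem (by simp)]
      omega

private lemma count_fin (m : ℕ) (r : ℕ) :
    ((Finset.univ : Finset (Fin m)).filter (fun v : Fin m => (v:ℕ) % 2 = r)).card
      = ((Finset.range m).filter (fun x => x % 2 = r)).card := by
  refine Finset.card_nbij (fun v => (v : ℕ)) ?_ ?_ ?_
  · intro a ha; simp only [Finset.mem_coe, Finset.mem_filter, Finset.mem_univ, true_and] at ha
    simp only [Finset.mem_coe, Finset.mem_filter, Finset.mem_range]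
    exact ⟨a.isLt, ha⟩
  · intro a _ b _ h; exact Fin.ext h
  · intro b hb
    simp only [Finset.coe_filter, Finset.mem_range, Set.mem_setOf_eq] at hb
    exact ⟨⟨b, hb.1⟩, by simp [hb.2], rfl⟩

private lemma turan_lower (m : ℕ) :
    ((m+1)/2) * (m/2) ≤ (SimpleGraph.turanGraph m 2).edgeFinset.card := by
  classical
  set A := (Finset.univ : Finset (Fin m)).filter (fun v : Fin m => (v:ℕ) % 2 = 0) with hA
  set B := (Finset.univ : Finset (Fin m)).filter (fun v : Fin m => (v:ℕ) % 2 = 1) with hB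
  have hcard : (A ×ˢ B).card = ((m+1)/2) * (m/2) := by
    rw [Finset.card_product, hA, hB, count_fin, count_fin, (count_mod_range m).1,
      (count_mod_range m).2]
  rw [← hcard]
  apply Finset.card_le_card_of_injOn (fun p => s(p.1, p.2))
  · rintro ⟨v, w⟩ hp
    rw [Finset.mem_coe, Finset.mem_product] at hp
    have hv : (v:ℕ) % 2 = 0 := (Finset.mem_filter.mp hp.1).2
    have hw : (w:ℕ) % 2 = 1 := (Finset.mem_filter.mp hp.2).2
    rw [Finset.mem_coe, SimpleGraph.mem_edgeFinset, SimpleGraph.mem_edgeSet]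
    show ¬ (v:ℕ) % 2 = (w:ℕ) % 2
    omega
  · rintro ⟨v, w⟩ hp ⟨v', w'⟩ hp' h
    rw [Finset.coe_product] at hp hp'
    obtain ⟨hp1, hp2⟩ := hp
    obtain ⟨hp1', hp2'⟩ := hp'
    simp only [Finset.mem_coe, hA, hB, Finset.mem_filter] at hp1 hp2 hp1' hp2'
    rw [Sym2.eq_iff] at h
    dsimp only at h
    rcases h with ⟨h1, h2⟩ | ⟨h1, h2⟩
    · rw [Prod.mk.injEq]; exact ⟨h1, h2⟩
    · exfalso
      rw [h1] at hp1
      have := hp1.2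
      have := hp2'.2
      omega

private lemma isDirPath_snoc {V : Type*} (E : V → V → Prop) {k : ℕ} {p : Fin (k+1) → V}
    (hp : IsDirPath E k p) {v : V} (hv : E (p (Fin.last k)) v) :
    IsDirPath E (k+1) (Fin.snoc p v) := by
  intro i
  induction i using Fin.lastCases with
  | last =>
    rw [Fin.succ_last, Fin.snoc_last, Fin.snoc_castSucc]
    exact hv
  | cast j =>
    rw [Fin.succ_castSucc, Fin.snoc_castSucc, Fin.snoc_castSucc]
    exact hp j

theorem extremelyReduced_edge_bound {V : Type*} [Fintype V] (E : V → V → Prop) (n ℓ : ℕ)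
    (hcard : Fintype.card V = n)
    (hacyc : ∀ v : V, ¬Relation.TransGen E v v)
    (hℓ : 1 ≤ ℓ)
    (hlong : ∃ p : Fin (ℓ + 1) → V, IsDirPath E ℓ p)
    (hmax : ¬∃ p : Fin (ℓ + 1 + 1) → V, IsDirPath E (ℓ + 1) p)
    (her : ExtremelyReduced E) :
    edgeCount E ≤ turanEdges (n - ℓ + 1) 2 + intervalTuran n ℓ := by
  obtain ⟨p0, hp0⟩ := hlong
  set lt : V → V → Prop := fun u v => Relation.TransGen E u v with hltdef
  have htr : Transitive lt := fun a b c h1 h2 => Relation.TransGen.trans h1 h2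
  have hirr : Irreflexive lt := hacyc
  set pred : V → ℕ → Prop :=
    fun v k => ∃ p : Fin (k+1) → V, IsDirPath E k p ∧ p (Fin.last k) = v with hpreddef
  have hpred0 : ∀ v, pred v 0 := fun v => ⟨fun _ => v, fun i => i.elim0, rfl⟩
  set h : V → ℕ := fun v => Nat.findGreatest (pred v) ℓ with hhdef
  have hub : ∀ v, h v ≤ ℓ := fun v => Nat.findGreatest_le ℓ
  have hspec : ∀ v, pred v (h v) := fun v => Nat.findGreatest_spec (Nat.zero_le _) (hpred0 v)
  have hstep : ∀ u v, E u v → h u < h v := by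
    intro u v huv
    obtain ⟨p, hp, hpl⟩ := hspec u
    have hP : pred v (h u + 1) :=
      ⟨Fin.snoc p v, isDirPath_snoc E hp (by rw [hpl]; exact huv), by simp⟩
    rcases Nat.lt_or_ge (h u) ℓ with hlt | hge
    · have h2 : h u + 1 ≤ Nat.findGreatest (pred v) ℓ := Nat.le_findGreatest (by omega) hP
      have h3 : h u + 1 ≤ h v := h2
      omega
    · exfalso
      have hEq : h u = ℓ := le_antisymm (hub u) hge
      rw [hEq] at hP
      obtain ⟨q, hq, -⟩ := hP
      exact hmax ⟨q, hq⟩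
  have hmono : ∀ u v, lt u v → h u < h v := by
    intro u v huv
    induction huv with
    | single h1 => exact hstep _ _ h1
    | tail h1 h2 ih => exact lt_trans ih (hstep _ _ h2)
  have hIC : ∀ x y : V, ¬lt x y → ¬lt y x → (∃ a, lt a x ∧ lt a y) →
      ¬∃ b, lt x b ∧ lt y b := by
    intro x y hxy hyx hex
    exact her x y (fun e => hxy (Relation.TransGen.single e))
      (fun e => hyx (Relation.TransGen.single e)) hex
  have hInc := main_stmt n V lt hcard htr hirr ℓ hℓ h hub hmono p0
    (fun i => Relation.TransGen.single (hp0 i)) hIC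
  -- edges are within strictly comparable ordered pairs
  have hedge : edgeCount E ≤ (Finset.univ.filter fun pr : V × V => lt pr.1 pr.2).card := by
    have hec : edgeCount E = (Finset.univ.filter fun pr : V × V => E pr.1 pr.2).card := by
      unfold edgeCount
      congr 1
    rw [hec]
    apply Finset.card_le_card
    intro pr hpr
    rw [Finset.mem_filter] at hpr ⊢
    exact ⟨hpr.1, Relation.TransGen.single hpr.2⟩
  have hswap : (Finset.univ.filter fun pr : V × V => lt pr.1 pr.2).card
      = (Finset.univ.filter fun pr : V × V => lt pr.2 pr.1).card := by
    apply Finset.card_nbij (fun pr => (pr.2, pr.1))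
    · intro a ha
      rw [Finset.mem_coe, Finset.mem_filter] at ha
      rw [Finset.mem_coe, Finset.mem_filter]
      exact ⟨Finset.mem_univ _, ha.2⟩
    · intro a _ b _ hab
      have h1 : a.2 = b.2 := congrArg Prod.fst hab
      have h2 : a.1 = b.1 := congrArg Prod.snd hab
      exact Prod.ext h2 h1
    · intro b hb
      simp only [Finset.coe_filter, Finset.mem_univ, true_and, Set.mem_setOf_eq] at hb
      simp only [Set.mem_image, Finset.mem_coe]
      refine ⟨(b.2, b.1), ?_, rfl⟩
      rw [Finset.mem_filter]
      exact ⟨Finset.mem_univ _, hb⟩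
  have hpart : (Finset.univ.filter fun pr : V × V => lt pr.1 pr.2).card
      + (Finset.univ.filter fun pr : V × V => lt pr.2 pr.1).card
      + incCount V lt = 2 * Nat.choose n 2 := by
    have hoff : ((Finset.univ : Finset V).offDiag).card = 2 * Nat.choose n 2 := by
      rw [Finset.offDiag_card, Finset.card_univ, hcard]
      have := two_mul_choose_two n
      omega
    rw [← hoff]
    have hd1 : Disjoint (Finset.univ.filter fun pr : V × V => lt pr.1 pr.2)
        (Finset.univ.filter fun pr : V × V => lt pr.2 pr.1) := by
      rw [Finset.disjoint_left]
      intro a ha hb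
      rw [Finset.mem_filter] at ha hb
      exact hirr a.1 (htr ha.2 hb.2)
    have hd2 : Disjoint ((Finset.univ.filter fun pr : V × V => lt pr.1 pr.2)
        ∪ (Finset.univ.filter fun pr : V × V => lt pr.2 pr.1))
        (Finset.univ.filter fun pr : V × V => pr.1 ≠ pr.2 ∧ ¬lt pr.1 pr.2 ∧ ¬lt pr.2 pr.1) := by
      rw [Finset.disjoint_left]
      intro a ha hb
      rw [Finset.mem_union, Finset.mem_filter, Finset.mem_filter] at ha
      rw [Finset.mem_filter] at hb
      rcases ha with ha | ha
      · exact hb.2.2.1 ha.2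
      · exact hb.2.2.2 ha.2
    have hcover : ((Finset.univ.filter fun pr : V × V => lt pr.1 pr.2)
        ∪ (Finset.univ.filter fun pr : V × V => lt pr.2 pr.1))
        ∪ (Finset.univ.filter fun pr : V × V => pr.1 ≠ pr.2 ∧ ¬lt pr.1 pr.2 ∧ ¬lt pr.2 pr.1)
        = (Finset.univ : Finset V).offDiag := by
      ext a
      simp only [Finset.mem_union, Finset.mem_filter, Finset.mem_univ, true_and,
        Finset.mem_offDiag]
      constructor
      · rintro ((h1 | h1) | ⟨h1, -, -⟩)
        · exact fun he => hirr a.1 (he ▸ h1)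
        · exact fun he => hirr a.2 (he ▸ h1)
        · exact h1
      · intro hne
        by_cases h1 : lt a.1 a.2
        · exact Or.inl (Or.inl h1)
        · by_cases h2 : lt a.2 a.1
          · exact Or.inl (Or.inr h2)
          · exact Or.inr ⟨hne, h1, h2⟩
    rw [← hcover, Finset.card_union_of_disjoint hd2, Finset.card_union_of_disjoint hd1]
    rfl
  have ht := turan_lower (n - ℓ + 1)
  rw [Nat.mul_comm] at ht
  have hga := gg_add_quarter (n - ℓ + 1)
  have hmn : Nat.choose (n - ℓ + 1) 2 ≤ Nat.choose n 2 := by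
    apply Nat.choose_le_choose
    have hn0 : 0 < n := by
      rw [← hcard]
      exact Fintype.card_pos_iff.mpr ⟨p0 0⟩
    omega
  unfold turanEdges intervalTuran
  omega
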